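/- (Problem-independent regret bound for ESTC.) In the ESTC bandit model below, suppose ‖x_{t,a}‖ ≤ k1 almost surely for all t, a, and that f(x₁,θ) − f(x₂,θ) ≤ C1‖x₁ − x₂‖ and f(x,θ₁) − f(x,θ₂) ≤ C2‖θ₁ − θ₂‖ for all contexts and parameters. Define the events A = {λ ≥ 2R*(∇L_{T0}(θ*))} and E = {B_{T0}(θ, θ*) ≥ α‖θ − θ*‖² − Z for all θ with θ − θ* ∈ ℂ}, where B_{T0} is the Bregman divergence of L_{T0} at θ*. Then the expected cumulative regret satisfies E[Regret(T)] ≤ 2C1k1T0 + 2C1k1·Σ_{t=T0}^{T}[P(Aᶜ) + P(Eᶜ)] + 2C2·Σ_{t=T0}^{T} √(9(λ²/α²)φ² + (1/α)(2Z + 4λR(θ*_{M^⊥}))). -/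

import Mathlib

/- STATEMENT 2 (Problem-independent regret bound for ESTC, Theorem 1 of the paper).
Under boundedness of the contexts and Lipschitzness of the reward in both
arguments (w.r.t. a norm ‖·‖), the expected cumulative regret of
Explore-the-Structure-Then-Commit is bounded by
2C1k1T0 + 2C1k1 Σ_{t=T0}^T [P(Aᶜ) + P(Eᶜ)]
  + 2C2 Σ_{t=T0}^T √(9(λ²/α²)φ² + (1/α)(2Z + 4λR(θ*_{M⊥}))). -/

noncomputable section
open MeasureTheory ProbabilityTheory
open scoped RealInnerProductSpace

/-- Orthogonal projection of `θ` onto the subspace `N`, in the ambient space. -/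
def proj {p : ℕ} (N : Submodule ℝ (EuclideanSpace ℝ (Fin p)))
    (θ : EuclideanSpace ℝ (Fin p)) : EuclideanSpace ℝ (Fin p) :=
  (N.orthogonalProjection θ : EuclideanSpace ℝ (Fin p))

/-- Dual norm `R*(u) = sup { ⟨u, v⟩ : R(v) ≤ 1 }`. -/
def dualNorm {p : ℕ} (R : EuclideanSpace ℝ (Fin p) → ℝ)
    (u : EuclideanSpace ℝ (Fin p)) : ℝ :=
  sSup ((fun v => ⟪u, v⟫) '' {v | R v ≤ 1})

section Helpers
variable {p : ℕ}

theorem R_sum_le (R : EuclideanSpace ℝ (Fin p) → ℝ) (htri : ∀ u v, R (u+v) ≤ R u + R v)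
    (hsmul : ∀ (c:ℝ) u, R (c • u) = |c| * R u)
    (s : Finset (Fin p)) (f : Fin p → EuclideanSpace ℝ (Fin p)) :
    R (∑ i ∈ s, f i) ≤ ∑ i ∈ s, R (f i) := by
  have h0 : R 0 = 0 := by simpa using hsmul 0 0
  classical
  induction s using Finset.induction_on with
  | empty => simp [h0]
  | insert _ _ hx ih =>
    rw [Finset.sum_insert hx, Finset.sum_insert hx]
    exact (htri _ _).trans (by linarith)

theorem R_nonneg (R : EuclideanSpace ℝ (Fin p) → ℝ) (htri : ∀ u v, R (u+v) ≤ R u + R v)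
    (hsmul : ∀ (c:ℝ) u, R (c • u) = |c| * R u) (u : EuclideanSpace ℝ (Fin p)) : 0 ≤ R u := by
  have h0 : R 0 = 0 := by simpa using hsmul 0 u
  have := htri u (-u)
  rw [add_neg_cancel, h0] at this
  have h2 : R (-u) = R u := by simpa using hsmul (-1) u
  linarith

theorem R_le_C (R : EuclideanSpace ℝ (Fin p) → ℝ) (htri : ∀ u v, R (u+v) ≤ R u + R v)
    (hsmul : ∀ (c:ℝ) u, R (c • u) = |c| * R u) :
    ∃ C : ℝ, 0 ≤ C ∧ ∀ v, R v ≤ C * ‖v‖ := by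
  classical
  set b := EuclideanSpace.basisFun (Fin p) ℝ
  refine ⟨∑ i, R (b i), Finset.sum_nonneg fun i _ => R_nonneg R htri hsmul _, fun v => ?_⟩
  have hv : v = ∑ i, b.repr v i • b i := (b.sum_repr v).symm
  calc R v = R (∑ i, b.repr v i • b i) := by rw [← hv]
    _ ≤ ∑ i, R (b.repr v i • b i) := R_sum_le R htri hsmul _ _
    _ ≤ ∑ i, R (b i) * ‖v‖ := by
        refine Finset.sum_le_sum fun i _ => ?_
        rw [hsmul]
        have h1 : |b.repr v i| ≤ ‖v‖ := by
          rw [b.repr_apply_apply]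
          have := abs_real_inner_le_norm (b i) v
          simpa [b.orthonormal.1 i] using this
        have := R_nonneg R htri hsmul (b i)
        calc |b.repr v i| * R (b i) ≤ ‖v‖ * R (b i) := by nlinarith
          _ = R (b i) * ‖v‖ := mul_comm _ _
    _ = (∑ i, R (b i)) * ‖v‖ := by rw [Finset.sum_mul]

theorem R_ge_c (R : EuclideanSpace ℝ (Fin p) → ℝ) (htri : ∀ u v, R (u+v) ≤ R u + R v)
    (hsmul : ∀ (c:ℝ) u, R (c • u) = |c| * R u)
    (hdef : ∀ u, R u = 0 ↔ u = 0)
    (hC : ∃ C : ℝ, 0 ≤ C ∧ ∀ v, R v ≤ C * ‖v‖)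
    (u0 : EuclideanSpace ℝ (Fin p)) (hu0 : u0 ≠ 0) :
    ∃ c : ℝ, 0 < c ∧ ∀ v, c * ‖v‖ ≤ R v := by
  obtain ⟨C, hC0, hCle⟩ := hC
  have hRsub : ∀ a b, R a - R b ≤ R (a - b) := by
    intro a b
    have := htri (a - b) b
    simpa using this
  have hcont : Continuous R := by
    have : LipschitzWith C.toNNReal R := by
      refine LipschitzWith.of_dist_le_mul fun a b => ?_
      rw [Real.dist_eq, dist_eq_norm]
      have hab := (hRsub a b).trans (hCle (a - b))
      have hba := (hRsub b a).trans (hCle (b - a))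
      rw [norm_sub_rev b a] at hba
      rw [abs_le]
      constructor
      · simp only [Real.coe_toNNReal C hC0]; linarith
      · simp only [Real.coe_toNNReal C hC0]; linarith
    exact this.continuous
  have hsne : (Metric.sphere (0 : EuclideanSpace ℝ (Fin p)) 1).Nonempty := by
    refine ⟨‖u0‖⁻¹ • u0, ?_⟩
    simp [norm_smul, norm_ne_zero_iff.2 hu0, abs_of_pos (inv_pos.2 (norm_pos_iff.2 hu0)),
      inv_mul_cancel₀ (norm_ne_zero_iff.2 hu0)]
  obtain ⟨vmin, hvmem, hvmin⟩ :=
    (isCompact_sphere (0 : EuclideanSpace ℝ (Fin p)) 1).exists_isMinOn hsne hcont.continuousOn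
  have hvnorm : ‖vmin‖ = 1 := by simpa using hvmem
  have hvne : vmin ≠ 0 := by intro h; rw [h] at hvnorm; simp at hvnorm
  have hc0 : 0 < R vmin := by
    rcases lt_or_eq_of_le (R_nonneg R htri hsmul vmin) with h | h
    · exact h
    · exact absurd ((hdef vmin).1 h.symm) hvne
  refine ⟨R vmin, hc0, fun v => ?_⟩
  rcases eq_or_ne v 0 with rfl | hv
  · simp [(hdef (0:EuclideanSpace ℝ (Fin p))).2 rfl]
  · have hnv : (0:ℝ) < ‖v‖ := norm_pos_iff.2 hv
    have hmem : ‖v‖⁻¹ • v ∈ Metric.sphere (0 : EuclideanSpace ℝ (Fin p)) 1 := by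
      simp [norm_smul, abs_of_pos (inv_pos.2 hnv), inv_mul_cancel₀ hnv.ne']
    have := hvmin hmem
    have hRv : R (‖v‖⁻¹ • v) = ‖v‖⁻¹ * R v := by
      rw [hsmul]; rw [abs_of_pos (inv_pos.2 hnv)]
    simp only [Set.mem_setOf_eq, hRv] at this
    calc R vmin * ‖v‖ ≤ (‖v‖⁻¹ * R v) * ‖v‖ := by nlinarith [this]
      _ = R v := by field_simp

theorem pairing_le (R : EuclideanSpace ℝ (Fin p) → ℝ)
    (hsmul : ∀ (c:ℝ) u, R (c • u) = |c| * R u)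
    (hdef : ∀ u, R u = 0 ↔ u = 0)
    (hRnn : ∀ u, 0 ≤ R u)
    (c : ℝ) (hc : 0 < c) (hcle : ∀ v, c * ‖v‖ ≤ R v)
    (u w : EuclideanSpace ℝ (Fin p)) :
    ⟪u, w⟫ ≤ dualNorm R u * R w := by
  have hbdd : BddAbove ((fun v => ⟪u, v⟫) '' {v | R v ≤ 1}) := by
    refine ⟨‖u‖ * c⁻¹, ?_⟩
    rintro _ ⟨v, hv, rfl⟩
    have h1 : ⟪u, v⟫ ≤ ‖u‖ * ‖v‖ := real_inner_le_norm u v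
    have h2 : ‖v‖ ≤ c⁻¹ := by
      have := hcle v
      have hle : c * ‖v‖ ≤ 1 := this.trans hv
      rw [← le_div_iff₀' hc] at hle
      simpa [one_div] using hle
    calc ⟪u, v⟫ ≤ ‖u‖ * ‖v‖ := h1
      _ ≤ ‖u‖ * c⁻¹ := by
        have := norm_nonneg u
        nlinarith
  rcases eq_or_lt_of_le (hRnn w) with h | h
  · have hw : w = 0 := (hdef w).1 h.symm
    have h0 : R (0 : EuclideanSpace ℝ (Fin p)) = 0 := (hdef 0).2 rfl
    simp [hw, h0]
  · set r := R w with hr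
    have hv1 : R (r⁻¹ • w) ≤ 1 := by
      rw [hsmul, abs_of_pos (inv_pos.2 h), ← hr, inv_mul_cancel₀ h.ne']
    have hmem : ⟪u, r⁻¹ • w⟫ ∈ (fun v => ⟪u, v⟫) '' {v | R v ≤ 1} :=
      ⟨r⁻¹ • w, hv1, rfl⟩
    have hsup := le_csSup hbdd hmem
    have hinner : ⟪u, r⁻¹ • w⟫ = r⁻¹ * ⟪u, w⟫ := real_inner_smul_right u w r⁻¹
    rw [hinner] at hsup
    have := mul_le_mul_of_nonneg_left hsup (le_of_lt h)
    calc ⟪u, w⟫ = r * (r⁻¹ * ⟪u, w⟫) := by field_simp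
      _ ≤ r * dualNorm R u := this
      _ = dualNorm R u * r := mul_comm _ _

theorem convex_grad_ineq (F : EuclideanSpace ℝ (Fin p) → ℝ)
    (hconv : ConvexOn ℝ Set.univ F) (hdiff : Differentiable ℝ F)
    (x v : EuclideanSpace ℝ (Fin p)) :
    ⟪gradient F x, v⟫ ≤ F (x + v) - F x := by
  set d := ⟪gradient F x, v⟫ with hd
  have hF : HasFDerivAt F (InnerProductSpace.toDual ℝ _ (gradient F x)) x :=
    (hdiff x).hasGradientAt.hasFDerivAt
  have hc : HasDerivAt (fun t : ℝ => x + t • v) v 0 := by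
    simpa using ((hasDerivAt_id (0:ℝ)).smul_const v).const_add x
  have hφ : HasDerivAt (fun t : ℝ => F (x + t • v)) d 0 := by
    have hF' : HasFDerivAt F (InnerProductSpace.toDual ℝ _ (gradient F x)) (x + (0:ℝ) • v) := by
      simpa using hF
    have := hF'.comp_hasDerivAt (x := (0:ℝ)) hc
    simpa [hd, Function.comp_def, InnerProductSpace.toDual_apply_apply] using this
  set φ : ℝ → ℝ := fun t => F (x + t • v) with hφdef
  have hslope : Filter.Tendsto (slope φ 0) (nhdsWithin 0 (Set.Ioi 0)) (nhds d) := by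
    have := hasDerivAt_iff_tendsto_slope.1 hφ
    exact this.mono_left (nhdsWithin_mono 0 (fun t ht => ne_of_gt ht))
  have hbound : ∀ᶠ t in nhdsWithin 0 (Set.Ioi 0), slope φ 0 t ≤ φ 1 - φ 0 := by
    filter_upwards [Ioc_mem_nhdsGT_of_mem (by norm_num : (0:ℝ) ∈ Set.Ico 0 1)] with t ht
    obtain ⟨ht0, ht1⟩ := ht
    have hcvx := hconv.2 (Set.mem_univ x) (Set.mem_univ (x + v))
      (by linarith : (0:ℝ) ≤ 1 - t) (le_of_lt ht0) (by ring)
    have heq : (1 - t) • x + t • (x + v) = x + t • v := by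
      rw [smul_add]; module
    rw [heq] at hcvx
    have hkey : φ t - φ 0 ≤ t * (φ 1 - φ 0) := by
      simp only [hφdef]
      simp only [zero_smul, add_zero, one_smul, smul_eq_mul] at hcvx ⊢
      nlinarith [hcvx]
    rw [slope_def_field]
    rw [sub_zero, div_le_iff₀ ht0]
    linarith [hkey]
  have hle : d ≤ φ 1 - φ 0 := le_of_tendsto hslope hbound
  simpa [hφdef] using hle

theorem proj_add_proj (N : Submodule ℝ (EuclideanSpace ℝ (Fin p)))
    (v : EuclideanSpace ℝ (Fin p)) : proj N v + proj Nᗮ v = v :=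
  N.starProjection_add_starProjection_orthogonal v

theorem proj_mem (N : Submodule ℝ (EuclideanSpace ℝ (Fin p)))
    (v : EuclideanSpace ℝ (Fin p)) : proj N v ∈ N := (N.orthogonalProjection v).2

theorem proj_norm_le (N : Submodule ℝ (EuclideanSpace ℝ (Fin p)))
    (v : EuclideanSpace ℝ (Fin p)) : ‖proj N v‖ ≤ ‖v‖ := by
  have h1 : ‖N.orthogonalProjectionOnto v‖ ≤ ‖(N.orthogonalProjectionOnto : _ →L[ℝ] N)‖ * ‖v‖ :=
    (N.orthogonalProjectionOnto).le_opNorm v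
  have h2 := N.orthogonalProjectionOnto_norm_le
  have := norm_nonneg v
  calc ‖proj N v‖ = ‖N.orthogonalProjectionOnto v‖ := rfl
    _ ≤ _ := h1
    _ ≤ 1 * ‖v‖ := by nlinarith
    _ = ‖v‖ := one_mul _

theorem estc_core (lam α Z a b e s ip Ls Lh Rh Rs RM φ : ℝ)
    (hlam : 0 < lam) (hα : 0 < α) (hZ : 0 ≤ Z)
    (hann : 0 ≤ a) (hbnn : 0 ≤ b) (henn : 0 ≤ e) (hsnn : 0 ≤ s) (hφpos : 0 < φ)
    (hpair2 : -ip ≤ lam / 2 * (a + b))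
    (hcvx : ip ≤ Lh - Ls)
    (hmin' : Lh + lam * Rh ≤ Ls + lam * Rs)
    (hdecomp : RM + b ≤ Rh + e + a)
    (hθstar_le : Rs ≤ RM + e)
    (hRSCimp : b ≤ 3 * a + 4 * e → α * s ^ 2 - Z ≤ Lh - Ls - ip)
    (h7 : a ≤ φ * s) :
    s ≤ Real.sqrt (9 * (lam ^ 2 / α ^ 2) * φ ^ 2 + (1 / α) * (2 * Z + 4 * lam * e)) := by
  have hRdiff : b - a - 2 * e ≤ Rh - Rs := by linarith
  have hcone : b ≤ 3 * a + 4 * e := by nlinarith [hlam]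
  have hRSC := hRSCimp hcone
  have hkey : α * s ^ 2 ≤ Z + 2 * lam * e + (3 * lam / 2) * a := by nlinarith [hlam]
  have hkey2 : α ^ 2 * s ^ 2 ≤ 9 * lam ^ 2 * φ ^ 2 + α * (2 * Z + 4 * lam * e) := by
    have p1 : α * (α * s ^ 2) ≤ α * (Z + 2 * lam * e + 3 * lam / 2 * a) :=
      mul_le_mul_of_nonneg_left hkey hα.le
    have p2 : (α * (3 * lam / 2)) * a ≤ (α * (3 * lam / 2)) * (φ * s) :=
      mul_le_mul_of_nonneg_left h7 (by positivity)
    nlinarith [sq_nonneg (α * s - 3 * lam * φ / 2), p1, p2]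
  have htarget : s ^ 2 ≤ 9 * (lam ^ 2 / α ^ 2) * φ ^ 2 + (1 / α) * (2 * Z + 4 * lam * e) := by
    have hα2 : (0:ℝ) < α ^ 2 := by positivity
    have expand : 9 * (lam ^ 2 / α ^ 2) * φ ^ 2 + (1 / α) * (2 * Z + 4 * lam * e) =
        (9 * lam ^ 2 * φ ^ 2 + α * (2 * Z + 4 * lam * e)) / α ^ 2 := by
      field_simp
    rw [expand, le_div_iff₀ hα2]
    linarith [hkey2]
  calc s = Real.sqrt (s ^ 2) := (Real.sqrt_sq hsnn).symm
    _ ≤ _ := Real.sqrt_le_sqrt htarget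

theorem estc_estimation
    (M Mbar : Submodule ℝ (EuclideanSpace ℝ (Fin p)))
    (R : EuclideanSpace ℝ (Fin p) → ℝ)
    (hR_tri : ∀ u v, R (u + v) ≤ R u + R v)
    (hR_smul : ∀ (c : ℝ) (u), R (c • u) = |c| * R u)
    (hR_def : ∀ u, R u = 0 ↔ u = 0)
    (hR_dec : ∀ θ ∈ M, ∀ γ ∈ Mbarᗮ, R (θ + γ) = R θ + R γ)
    (φ : ℝ) (hφ : IsLUB ((fun u => R u / ‖u‖) '' {u | u ∈ Mbar ∧ u ≠ 0}) φ)
    (lam α Z : ℝ) (hlam : 0 < lam) (hα : 0 < α) (hZ : 0 ≤ Z)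
    (θstar θhat : EuclideanSpace ℝ (Fin p))
    (Lf : EuclideanSpace ℝ (Fin p) → ℝ)
    (hconv : ConvexOn ℝ Set.univ Lf) (hdiff : Differentiable ℝ Lf)
    (hmin : ∀ θ, Lf θhat + lam * R θhat ≤ Lf θ + lam * R θ)
    (hA : 2 * dualNorm R (gradient Lf θstar) ≤ lam)
    (hE : ∀ θ : EuclideanSpace ℝ (Fin p),
        R (proj Mbarᗮ (θ - θstar)) ≤ 3 * R (proj Mbar (θ - θstar)) + 4 * R (proj Mᗮ θstar) →
        α * ‖θ - θstar‖ ^ 2 - Z ≤ Lf θ - Lf θstar - ⟪gradient Lf θstar, θ - θstar⟫) :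
    ‖θhat - θstar‖ ≤ Real.sqrt (9 * (lam ^ 2 / α ^ 2) * φ ^ 2 +
      (1 / α) * (2 * Z + 4 * lam * R (proj Mᗮ θstar))) := by
  have hRnn := R_nonneg R hR_tri hR_smul
  have hne : {u : EuclideanSpace ℝ (Fin p) | u ∈ Mbar ∧ u ≠ 0}.Nonempty := by
    rcases Set.eq_empty_or_nonempty {u : EuclideanSpace ℝ (Fin p) | u ∈ Mbar ∧ u ≠ 0} with he | h
    · exfalso
      rw [he, Set.image_empty] at hφ
      have h1 : φ - 1 ∈ upperBounds (∅ : Set ℝ) := by simp [upperBounds]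
      have := hφ.2 h1
      linarith
    · exact h
  obtain ⟨u0, hu0M, hu0ne⟩ := hne
  obtain ⟨c, hc, hcle⟩ := R_ge_c R hR_tri hR_smul hR_def (R_le_C R hR_tri hR_smul) u0 hu0ne
  have hφpos : 0 < φ := by
    have hmem : R u0 / ‖u0‖ ∈ (fun u => R u / ‖u‖) '' {u | u ∈ Mbar ∧ u ≠ 0} :=
      ⟨u0, ⟨hu0M, hu0ne⟩, rfl⟩
    have h1 := hφ.1 hmem
    have hn0 : (0:ℝ) < ‖u0‖ := norm_pos_iff.2 hu0ne
    have hR0 : 0 < R u0 := by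
      rcases lt_or_eq_of_le (hRnn u0) with h | h
      · exact h
      · exact absurd ((hR_def u0).1 h.symm) hu0ne
    calc (0:ℝ) < R u0 / ‖u0‖ := div_pos hR0 hn0
      _ ≤ φ := h1
  have hRΔ : R (θhat - θstar) ≤ R (proj Mbar (θhat - θstar)) + R (proj Mbarᗮ (θhat - θstar)) := by
    conv_lhs => rw [← proj_add_proj Mbar (θhat - θstar)]
    exact hR_tri _ _
  have hdual : dualNorm R (gradient Lf θstar) ≤ lam / 2 := by linarith
  have hRnegΔ : R (-(θhat - θstar)) = R (θhat - θstar) := by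
    have := hR_smul (-1) (θhat - θstar)
    simp only [neg_one_smul, abs_neg, abs_one, one_mul] at this
    exact this
  have hpair2 : -⟪gradient Lf θstar, θhat - θstar⟫ ≤
      lam / 2 * (R (proj Mbar (θhat - θstar)) + R (proj Mbarᗮ (θhat - θstar))) := by
    have h := pairing_le R hR_smul hR_def hRnn c hc hcle (gradient Lf θstar) (-(θhat - θstar))
    rw [inner_neg_right, hRnegΔ] at h
    have h2 : dualNorm R (gradient Lf θstar) * R (θhat - θstar) ≤
        (lam / 2) * (R (proj Mbar (θhat - θstar)) + R (proj Mbarᗮ (θhat - θstar))) := by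
      calc dualNorm R (gradient Lf θstar) * R (θhat - θstar)
          ≤ (lam / 2) * R (θhat - θstar) := by nlinarith [hRnn (θhat - θstar)]
        _ ≤ _ := by nlinarith [hlam]
    linarith
  have hcvx : ⟪gradient Lf θstar, θhat - θstar⟫ ≤ Lf θhat - Lf θstar := by
    have := convex_grad_ineq Lf hconv hdiff θstar (θhat - θstar)
    rw [add_sub_cancel] at this
    exact this
  have hdecomp : R (proj M θstar) + R (proj Mbarᗮ (θhat - θstar)) ≤
      R θhat + R (proj Mᗮ θstar) + R (proj Mbar (θhat - θstar)) := by
    have hP : R (proj M θstar + proj Mbarᗮ (θhat - θstar)) =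
        R (proj M θstar) + R (proj Mbarᗮ (θhat - θstar)) :=
      hR_dec _ (proj_mem M θstar) _ (proj_mem Mbarᗮ (θhat - θstar))
    have key : ∀ (pm po qb qo th ts : EuclideanSpace ℝ (Fin p)), pm + po = ts →
        qb + qo = th - ts → pm + qo = th + (-(po + qb)) := by
      intro pm po qb qo th ts hh1 hh2
      have hth : th = pm + po + (qb + qo) := by rw [hh1, hh2]; abel
      rw [hth]; abel
    have hsplit : proj M θstar + proj Mbarᗮ (θhat - θstar) =
        θhat + (-(proj Mᗮ θstar + proj Mbar (θhat - θstar))) :=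
      key _ _ _ _ _ _ (proj_add_proj M θstar) (proj_add_proj Mbar (θhat - θstar))
    have htr : R (proj M θstar + proj Mbarᗮ (θhat - θstar)) ≤
        R θhat + R (-(proj Mᗮ θstar + proj Mbar (θhat - θstar))) := by
      rw [hsplit]; exact hR_tri _ _
    have hneg : R (-(proj Mᗮ θstar + proj Mbar (θhat - θstar))) =
        R (proj Mᗮ θstar + proj Mbar (θhat - θstar)) := by
      have := hR_smul (-1) (proj Mᗮ θstar + proj Mbar (θhat - θstar))
      simp only [neg_one_smul, abs_neg, abs_one, one_mul] at this
      exact this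
    have hQ : R (proj Mᗮ θstar + proj Mbar (θhat - θstar)) ≤
        R (proj Mᗮ θstar) + R (proj Mbar (θhat - θstar)) := hR_tri _ _
    rw [hP, hneg] at htr
    linarith
  have hθstar_le : R θstar ≤ R (proj M θstar) + R (proj Mᗮ θstar) := by
    conv_lhs => rw [← proj_add_proj M θstar]
    exact hR_tri _ _
  have h7 : R (proj Mbar (θhat - θstar)) ≤ φ * ‖θhat - θstar‖ := by
    rcases eq_or_ne (proj Mbar (θhat - θstar)) 0 with h | h
    · rw [h, (hR_def 0).2 rfl]
      positivity
    · have hmem : R (proj Mbar (θhat - θstar)) / ‖proj Mbar (θhat - θstar)‖ ∈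
          (fun u => R u / ‖u‖) '' {u | u ∈ Mbar ∧ u ≠ 0} :=
        ⟨proj Mbar (θhat - θstar), ⟨proj_mem Mbar (θhat - θstar), h⟩, rfl⟩
      have h1 := hφ.1 hmem
      have hn : (0:ℝ) < ‖proj Mbar (θhat - θstar)‖ := norm_pos_iff.2 h
      have h2 : R (proj Mbar (θhat - θstar)) ≤ φ * ‖proj Mbar (θhat - θstar)‖ := by
        rw [← div_le_iff₀ hn]
        exact h1
      have h3 : ‖proj Mbar (θhat - θstar)‖ ≤ ‖θhat - θstar‖ := proj_norm_le Mbar (θhat - θstar)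
      nlinarith [hφpos.le]
  exact estc_core lam α Z (R (proj Mbar (θhat - θstar))) (R (proj Mbarᗮ (θhat - θstar)))
    (R (proj Mᗮ θstar)) ‖θhat - θstar‖ ⟪gradient Lf θstar, θhat - θstar⟫
    (Lf θstar) (Lf θhat) (R θhat) (R θstar) (R (proj M θstar)) φ
    hlam hα hZ (hRnn _) (hRnn _) (hRnn _) (norm_nonneg _) hφpos
    hpair2 hcvx (hmin θstar) hdecomp hθstar_le (hE θhat) h7

end Helpers

set_option maxHeartbeats 1000000 in
theorem estc_problem_independent_regret_bound
    {p : ℕ} (K T T0 : ℕ) (hK : 0 < K) (hT0 : 0 < T0) (hT0T : T0 ≤ T)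
    {Ω : Type*} [MeasurableSpace Ω] (μ : Measure Ω) [IsProbabilityMeasure μ]
    (M Mbar : Submodule ℝ (EuclideanSpace ℝ (Fin p))) (hMM : M ≤ Mbar)
    -- R is a norm, decomposable w.r.t. (M, M̄⊥):
    (R : EuclideanSpace ℝ (Fin p) → ℝ)
    (hR_tri : ∀ u v, R (u + v) ≤ R u + R v)
    (hR_smul : ∀ (c : ℝ) (u), R (c • u) = |c| * R u)
    (hR_def : ∀ u, R u = 0 ↔ u = 0)
    (hR_dec : ∀ θ ∈ M, ∀ γ ∈ Mbarᗮ, R (θ + γ) = R θ + R γ)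
    -- φ is the (finite) subspace compatibility constant of (‖·‖, R) on M̄:
    (φ : ℝ) (hφ : IsLUB ((fun u => R u / ‖u‖) '' {u | u ∈ Mbar ∧ u ≠ 0}) φ)
    (lam α Z : ℝ) (hlam : 0 < lam) (hα : 0 < α) (hZ : 0 ≤ Z)
    -- model data: true parameter, reward function, contexts, arms, noise, rewards:
    (θstar : EuclideanSpace ℝ (Fin p))
    (f : EuclideanSpace ℝ (Fin p) → EuclideanSpace ℝ (Fin p) → ℝ)
    (x : ℕ → Fin K → Ω → EuclideanSpace ℝ (Fin p))
    (a astar : ℕ → Ω → Fin K)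
    (ε : ℕ → Ω → ℝ) (y : ℕ → Ω → ℝ)
    (hx_meas : ∀ t k, Measurable (x t k)) (ha_meas : ∀ t, Measurable (a t))
    -- Assumption 1: ‖x_{t,a}‖ ≤ k1 almost surely:
    (k1 : ℝ) (hk1 : ∀ t k, ∀ᵐ ω ∂μ, ‖x t k ω‖ ≤ k1)
    -- Assumption 2: Lipschitzness of f in both arguments:
    (C1 C2 : ℝ)
    (hLip1 : ∀ x1 x2 θ, f x1 θ - f x2 θ ≤ C1 * ‖x1 - x2‖)
    (hLip2 : ∀ z θ1 θ2, f z θ1 - f z θ2 ≤ C2 * ‖θ1 - θ2‖)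
    -- exploration phase: uniformly random arms, observed noisy rewards:
    (hunif : ∀ t, 1 ≤ t → t ≤ T0 → ∀ k : Fin K, μ {ω | a t ω = k} = (K : ENNReal)⁻¹)
    (hε_mean : ∀ t, 1 ≤ t → t ≤ T0 → ∫ ω, ε t ω ∂μ = 0)
    (hy : ∀ t, 1 ≤ t → t ≤ T0 → ∀ ω, y t ω = f (x t (a t ω) ω) θstar + ε t ω)
    -- the loss is an M-estimator built from convex differentiable losses:
    (ℓ : ℕ → Ω → EuclideanSpace ℝ (Fin p) → ℝ)
    (hℓ_conv : ∀ τ ω, ConvexOn ℝ Set.univ (ℓ τ ω))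
    (hℓ_diff : ∀ τ ω, Differentiable ℝ (ℓ τ ω))
    (L : Ω → EuclideanSpace ℝ (Fin p) → ℝ)
    (hL : ∀ ω θ, L ω θ = (1 / (T0 : ℝ)) * ∑ τ ∈ Finset.Icc 1 T0, ℓ τ ω θ)
    -- θ_{T0} almost surely minimizes the regularized loss:
    (θT0 : Ω → EuclideanSpace ℝ (Fin p)) (hθT0_meas : Measurable θT0)
    (hmin : ∀ᵐ ω ∂μ, ∀ θ, L ω (θT0 ω) + lam * R (θT0 ω) ≤ L ω θ + lam * R θ)
    -- commit phase: a_t maximizes the estimated reward: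
    (hcommit : ∀ ω, ∀ t, T0 < t → t ≤ T → ∀ b : Fin K,
      f (x t b ω) (θT0 ω) ≤ f (x t (a t ω) ω) (θT0 ω))
    -- a_t* maximizes the true reward:
    (hastar : ∀ ω, ∀ t, 1 ≤ t → t ≤ T → ∀ b : Fin K,
      f (x t b ω) θstar ≤ f (x t (astar t ω) ω) θstar) :
    -- conclusion: expected regret bound
    ∫ ω, (∑ t ∈ Finset.Icc 1 T,
        (f (x t (astar t ω) ω) θstar - f (x t (a t ω) ω) θstar)) ∂μ ≤
      2 * C1 * k1 * T0
      + 2 * C1 * k1 * ∑ _t ∈ Finset.Icc T0 T,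
          ((μ {ω | 2 * dualNorm R (gradient (L ω) θstar) ≤ lam}ᶜ).toReal
            + (μ {ω | ∀ θ : EuclideanSpace ℝ (Fin p),
                R (proj Mbarᗮ (θ - θstar)) ≤
                  3 * R (proj Mbar (θ - θstar)) + 4 * R (proj Mᗮ θstar) →
                α * ‖θ - θstar‖ ^ 2 - Z ≤
                  L ω θ - L ω θstar - ⟪gradient (L ω) θstar, θ - θstar⟫}ᶜ).toReal)
      + 2 * C2 * ∑ _t ∈ Finset.Icc T0 T,
          Real.sqrt (9 * (lam ^ 2 / α ^ 2) * φ ^ 2 +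
            (1 / α) * (2 * Z + 4 * lam * R (proj Mᗮ θstar))) := by
  classical
  have hRnn := R_nonneg R hR_tri hR_smul
  -- a nonzero vector exists
  have hne : {u : EuclideanSpace ℝ (Fin p) | u ∈ Mbar ∧ u ≠ 0}.Nonempty := by
    rcases Set.eq_empty_or_nonempty {u : EuclideanSpace ℝ (Fin p) | u ∈ Mbar ∧ u ≠ 0}
      with he | h
    · exfalso
      rw [he, Set.image_empty] at hφ
      have h1 : φ - 1 ∈ upperBounds (∅ : Set ℝ) := by simp [upperBounds]
      have := hφ.2 h1
      linarith
    · exact h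
  obtain ⟨u0, hu0M, hu0ne⟩ := hne
  have hu0norm : (0:ℝ) < ‖u0‖ := norm_pos_iff.2 hu0ne
  have hC1 : 0 ≤ C1 := by
    have h1 := hLip1 u0 0 θstar
    have h2 := hLip1 0 u0 θstar
    rw [sub_zero] at h1
    rw [zero_sub, norm_neg] at h2
    nlinarith
  have hC2 : 0 ≤ C2 := by
    have h1 := hLip2 0 u0 0
    have h2 := hLip2 0 0 u0
    rw [sub_zero] at h1
    rw [zero_sub, norm_neg] at h2
    nlinarith
  have hk1nn : 0 ≤ k1 := by
    haveI : (MeasureTheory.ae μ).NeBot := MeasureTheory.ae_neBot.2 (IsProbabilityMeasure.ne_zero μ)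
    obtain ⟨ω, hω⟩ := (hk1 0 ⟨0, hK⟩).exists
    exact le_trans (norm_nonneg _) hω
  obtain ⟨sq, hsqdef⟩ : ∃ r : ℝ, Real.sqrt (9 * (lam ^ 2 / α ^ 2) * φ ^ 2 +
      (1 / α) * (2 * Z + 4 * lam * R (proj Mᗮ θstar))) = r := ⟨_, rfl⟩
  have hsqnn : 0 ≤ sq := hsqdef ▸ Real.sqrt_nonneg _
  obtain ⟨A, hAdef⟩ : ∃ s : Set Ω,
      {ω | 2 * dualNorm R (gradient (L ω) θstar) ≤ lam} = s := ⟨_, rfl⟩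
  obtain ⟨Ee, hEdef⟩ : ∃ s : Set Ω, ({ω | ∀ θ : EuclideanSpace ℝ (Fin p),
      R (proj Mbarᗮ (θ - θstar)) ≤
        3 * R (proj Mbar (θ - θstar)) + 4 * R (proj Mᗮ θstar) →
      α * ‖θ - θstar‖ ^ 2 - Z ≤
        L ω θ - L ω θstar - ⟪gradient (L ω) θstar, θ - θstar⟫} : Set Ω) = s := ⟨_, rfl⟩
  rw [hAdef, hEdef, hsqdef]
  obtain ⟨HA, hHAsub, hHAm, hHAeq⟩ := exists_measurable_superset μ Aᶜ
  obtain ⟨HE, hHEsub, hHEm, hHEeq⟩ := exists_measurable_superset μ Eeᶜ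
  obtain ⟨S, hSdef⟩ : ∃ s : Set Ω, HA ∪ HE = s := ⟨_, rfl⟩
  have hSm : MeasurableSet S := hSdef ▸ hHAm.union hHEm
  obtain ⟨c0, hc0def⟩ : ∃ r : ℝ,
      2 * C1 * k1 * (T0:ℝ) + ((T - T0 : ℕ) : ℝ) * (2 * C2 * sq) = r := ⟨_, rfl⟩
  obtain ⟨c1, hc1def⟩ : ∃ r : ℝ, ((T - T0 : ℕ) : ℝ) * (2 * C1 * k1) = r := ⟨_, rfl⟩
  have hg_int : Integrable (fun ω => c0 + c1 * S.indicator (fun _ => (1:ℝ)) ω) μ := by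
    apply Integrable.add (integrable_const c0)
    exact ((integrable_const (1:ℝ)).indicator hSm).const_mul c1
  have hg_val : ∫ ω, (c0 + c1 * S.indicator (fun _ => (1:ℝ)) ω) ∂μ
      = c0 + c1 * (μ S).toReal := by
    rw [integral_add (integrable_const c0) (((integrable_const (1:ℝ)).indicator hSm).const_mul c1)]
    rw [integral_const, integral_const_mul, integral_indicator_const (1:ℝ) hSm]
    simp [measure_univ, Measure.real]
  -- almost-everywhere pointwise bound
  have hxk_ae : ∀ᵐ ω ∂μ, ∀ t k, ‖x t k ω‖ ≤ k1 := by
    rw [ae_all_iff]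
    intro t
    rw [ae_all_iff]
    intro k
    exact hk1 t k
  have hbound : ∀ᵐ ω ∂μ, (∑ t ∈ Finset.Icc 1 T,
      (f (x t (astar t ω) ω) θstar - f (x t (a t ω) ω) θstar)) ≤
      c0 + c1 * S.indicator (fun _ => (1:ℝ)) ω := by
    filter_upwards [hxk_ae, hmin] with ω hxω hminω
    have hterm : ∀ t, f (x t (astar t ω) ω) θstar - f (x t (a t ω) ω) θstar
        ≤ 2 * C1 * k1 := by
      intro t
      have h1 := hLip1 (x t (astar t ω) ω) (x t (a t ω) ω) θstar
      have h2 : ‖x t (astar t ω) ω - x t (a t ω) ω‖ ≤ 2 * k1 := by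
        refine (norm_sub_le _ _).trans ?_
        linarith [hxω t (astar t ω), hxω t (a t ω)]
      nlinarith
    have hIccIoc : Finset.Icc 1 T = Finset.Ioc 0 T := by
      ext n; simp [Finset.mem_Icc, Finset.mem_Ioc]; omega
    rw [hIccIoc, ← Finset.sum_Ioc_consecutive _ (Nat.zero_le T0) hT0T]
    have hfirst : ∑ t ∈ Finset.Ioc 0 T0,
        (f (x t (astar t ω) ω) θstar - f (x t (a t ω) ω) θstar) ≤ (T0 : ℝ) * (2 * C1 * k1) := by
      calc ∑ t ∈ Finset.Ioc 0 T0, (f (x t (astar t ω) ω) θstar - f (x t (a t ω) ω) θstar)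
          ≤ ∑ _t ∈ Finset.Ioc 0 T0, (2 * C1 * k1) :=
            Finset.sum_le_sum fun t _ => hterm t
        _ = (T0 : ℝ) * (2 * C1 * k1) := by
            rw [Finset.sum_const, Nat.card_Ioc, nsmul_eq_mul]
            norm_num
    have hsecond : ∑ t ∈ Finset.Ioc T0 T,
        (f (x t (astar t ω) ω) θstar - f (x t (a t ω) ω) θstar) ≤
        ((T - T0 : ℕ) : ℝ) * (2 * C2 * sq)
          + ((T - T0 : ℕ) : ℝ) * (2 * C1 * k1) * S.indicator (fun _ => (1:ℝ)) ω := by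
      calc ∑ t ∈ Finset.Ioc T0 T, (f (x t (astar t ω) ω) θstar - f (x t (a t ω) ω) θstar)
          ≤ ∑ _t ∈ Finset.Ioc T0 T,
              (2 * C1 * k1 * S.indicator (fun _ => (1:ℝ)) ω + 2 * C2 * sq) := by
            refine Finset.sum_le_sum fun t ht => ?_
            rw [Finset.mem_Ioc] at ht
            by_cases hωS : ω ∈ S
            · rw [Set.indicator_of_mem hωS]
              have := hterm t
              nlinarith [hsqnn, hC2]
            · rw [Set.indicator_of_notMem hωS]
              rw [← hSdef] at hωS
              have hωA : ω ∈ A := by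
                by_contra hcon
                exact hωS (Or.inl (hHAsub hcon))
              have hωE : ω ∈ Ee := by
                by_contra hcon
                exact hωS (Or.inr (hHEsub hcon))
              rw [← hAdef] at hωA
              rw [← hEdef] at hωE
              -- convexity and differentiability of L ω
              have hfun : L ω = fun θ => (1 / (T0 : ℝ)) * ∑ τ ∈ Finset.Icc 1 T0, ℓ τ ω θ :=
                funext (hL ω)
              have hsumconv : ConvexOn ℝ Set.univ
                  (fun θ => ∑ τ ∈ Finset.Icc 1 T0, ℓ τ ω θ) := by
                induction (Finset.Icc 1 T0) using Finset.induction_on with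
                | empty => simpa using convexOn_const (0:ℝ) convex_univ
                | insert _ _ hxs ih =>
                  simp only [Finset.sum_insert hxs]
                  exact (hℓ_conv _ ω).add ih
              have hLconv : ConvexOn ℝ Set.univ (L ω) := by
                rw [hfun]
                have := hsumconv.smul
                  (c := 1 / (T0 : ℝ)) (by positivity)
                simpa [smul_eq_mul] using this
              have hLdiff : Differentiable ℝ (L ω) := by
                rw [hfun]
                exact (Differentiable.fun_sum fun τ _ => hℓ_diff τ ω).const_mul _
              have hest : ‖θT0 ω - θstar‖ ≤ sq := by
                rw [← hsqdef]
                exact estc_estimation M Mbar R hR_tri hR_smul hR_def hR_dec φ hφ lam α Z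
                  hlam hα hZ θstar (θT0 ω) (L ω) hLconv hLdiff hminω hωA hωE
              have e1 := hLip2 (x t (astar t ω) ω) θstar (θT0 ω)
              have e2 := hLip2 (x t (a t ω) ω) (θT0 ω) θstar
              have e3 := hcommit ω t ht.1 ht.2 (astar t ω)
              rw [norm_sub_rev] at e1
              have hfinal : f (x t (astar t ω) ω) θstar - f (x t (a t ω) ω) θstar ≤
                  2 * C2 * ‖θT0 ω - θstar‖ := by linarith
              nlinarith [hfinal, hest, hC2, norm_nonneg (θT0 ω - θstar)]
        _ = ((T - T0 : ℕ) : ℝ) * (2 * C2 * sq)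
              + ((T - T0 : ℕ) : ℝ) * (2 * C1 * k1) * S.indicator (fun _ => (1:ℝ)) ω := by
            rw [Finset.sum_const, Nat.card_Ioc, nsmul_eq_mul]; ring
    rw [← hc0def, ← hc1def]
    linarith [hfirst, hsecond]
  -- measure bound
  have hmeas_bound : (μ S).toReal ≤ (μ Aᶜ).toReal + (μ Eeᶜ).toReal := by
    rw [← hSdef, ← hHAeq, ← hHEeq]
    rw [← ENNReal.toReal_add (measure_ne_top μ HA) (measure_ne_top μ HE)]
    exact ENNReal.toReal_mono
      (by exact ENNReal.add_ne_top.2 ⟨measure_ne_top μ HA, measure_ne_top μ HE⟩)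
      (measure_union_le HA HE)
  -- the right-hand side, simplified
  have hcard : (Finset.Icc T0 T).card = T + 1 - T0 := Nat.card_Icc T0 T
  have hRHS : 2 * C1 * k1 * (T0:ℝ)
      + 2 * C1 * k1 * ∑ _t ∈ Finset.Icc T0 T, ((μ Aᶜ).toReal + (μ Eeᶜ).toReal)
      + 2 * C2 * ∑ _t ∈ Finset.Icc T0 T, sq =
      2 * C1 * k1 * (T0:ℝ)
      + 2 * C1 * k1 * (((T + 1 - T0 : ℕ):ℝ) * ((μ Aᶜ).toReal + (μ Eeᶜ).toReal))
      + 2 * C2 * (((T + 1 - T0 : ℕ):ℝ) * sq) := by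
    rw [Finset.sum_const, Finset.sum_const, hcard, nsmul_eq_mul, nsmul_eq_mul]
  have hfinal_arith : c0 + c1 * (μ S).toReal ≤
      2 * C1 * k1 * (T0:ℝ)
      + 2 * C1 * k1 * ∑ _t ∈ Finset.Icc T0 T, ((μ Aᶜ).toReal + (μ Eeᶜ).toReal)
      + 2 * C2 * ∑ _t ∈ Finset.Icc T0 T, sq := by
    rw [hRHS, ← hc0def, ← hc1def]
    have hcast1 : ((T - T0 : ℕ) : ℝ) = (T : ℝ) - (T0 : ℝ) := by
      rw [Nat.cast_sub hT0T]
    have hcast2 : ((T + 1 - T0 : ℕ) : ℝ) = (T : ℝ) + 1 - (T0 : ℝ) := by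
      rw [Nat.cast_sub (le_trans hT0T (Nat.le_succ T))]
      push_cast; ring
    rw [hcast1, hcast2]
    have hTT0 : (0:ℝ) ≤ (T:ℝ) - (T0:ℝ) := by
      have := (Nat.cast_le (α := ℝ)).2 hT0T
      linarith
    have hpA : 0 ≤ (μ Aᶜ).toReal := ENNReal.toReal_nonneg
    have hpE : 0 ≤ (μ Eeᶜ).toReal := ENNReal.toReal_nonneg
    have hμS0 : 0 ≤ (μ S).toReal := ENNReal.toReal_nonneg
    have hXnn : (0:ℝ) ≤ 2 * C1 * k1 := mul_nonneg (mul_nonneg (by norm_num) hC1) hk1nn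
    have hYnn : (0:ℝ) ≤ 2 * C2 * sq := mul_nonneg (mul_nonneg (by norm_num) hC2) hsqnn
    have e1 : ((T:ℝ) - (T0:ℝ)) * (2 * C2 * sq) ≤ ((T:ℝ) + 1 - (T0:ℝ)) * (2 * C2 * sq) :=
      mul_le_mul_of_nonneg_right (by linarith) hYnn
    have e2 : (((T:ℝ) - (T0:ℝ)) * (2 * C1 * k1)) * (μ S).toReal ≤
        (((T:ℝ) + 1 - (T0:ℝ)) * (2 * C1 * k1)) * ((μ Aᶜ).toReal + (μ Eeᶜ).toReal) := by
      apply mul_le_mul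
      · exact mul_le_mul_of_nonneg_right (by linarith) hXnn
      · exact hmeas_bound
      · exact hμS0
      · exact mul_nonneg (by linarith) hXnn
    nlinarith [e1, e2]
  by_cases hint : Integrable (fun ω => (∑ t ∈ Finset.Icc 1 T,
      (f (x t (astar t ω) ω) θstar - f (x t (a t ω) ω) θstar))) μ
  · calc ∫ ω, (∑ t ∈ Finset.Icc 1 T,
          (f (x t (astar t ω) ω) θstar - f (x t (a t ω) ω) θstar)) ∂μ
        ≤ ∫ ω, (c0 + c1 * S.indicator (fun _ => (1:ℝ)) ω) ∂μ :=
          integral_mono_ae hint hg_int hbound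
      _ = c0 + c1 * (μ S).toReal := hg_val
      _ ≤ _ := hfinal_arith
  · rw [integral_undef hint]
    have hpos : (0:ℝ) ≤ 2 * C1 * k1 * (T0:ℝ)
        + 2 * C1 * k1 * ∑ _t ∈ Finset.Icc T0 T, ((μ Aᶜ).toReal + (μ Eeᶜ).toReal)
        + 2 * C2 * ∑ _t ∈ Finset.Icc T0 T, sq := by
      have h1 : (0:ℝ) ≤ ∑ _t ∈ Finset.Icc T0 T, ((μ Aᶜ).toReal + (μ Eeᶜ).toReal) :=
        Finset.sum_nonneg fun _ _ => add_nonneg ENNReal.toReal_nonneg ENNReal.toReal_nonneg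
      have h2 : (0:ℝ) ≤ ∑ _t ∈ Finset.Icc T0 T, sq :=
        Finset.sum_nonneg fun _ _ => hsqnn
      have := Nat.cast_nonneg (α := ℝ) T0
      positivity
    exact hpos
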